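/- Let k ≥ 2 and let G be a forest on a finite vertex type with at least 2k + 2 vertices. If S is a sibling set of size k in G, then G ⊕ S has degeneracy exactly k. -/

import Mathlib

open SimpleGraph

/-- Subgraph complementation: `G ⊕ S` toggles all adjacencies inside `S`. -/
def scomp {V : Type*} (G : SimpleGraph V) (S : Set V) : SimpleGraph V where
  Adj u v := u ≠ v ∧ (((u ∈ S ∧ v ∈ S) ∧ ¬ G.Adj u v) ∨ (¬(u ∈ S ∧ v ∈ S) ∧ G.Adj u v))
  symm := by
    constructor
    intro u v h
    obtain ⟨hne, h⟩ := h
    refine ⟨hne.symm, ?_⟩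
    rcases h with ⟨⟨hu, hv⟩, hnadj⟩ | ⟨hns, hadj⟩
    · exact Or.inl ⟨⟨hv, hu⟩, fun h => hnadj h.symm⟩
    · exact Or.inr ⟨fun h' => hns ⟨h'.2, h'.1⟩, hadj.symm⟩
  loopless := by constructor; intro u h; exact h.1 rfl

/-- `s` is an independent set of `G`. -/
def IsIndep {V : Type*} (G : SimpleGraph V) (s : Set V) : Prop :=
  ∀ ⦃u⦄, u ∈ s → ∀ ⦃v⦄, v ∈ s → ¬ G.Adj u v

/-- `H` has degeneracy exactly `k`. -/
def DegeneracyExactly {V : Type*} (H : SimpleGraph V) (k : ℕ) : Prop :=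
  (∀ X : Set V, X.Nonempty → ∃ v ∈ X, {w | w ∈ X ∧ H.Adj v w}.ncard ≤ k) ∧
  (∃ X : Set V, X.Nonempty ∧ ∀ v ∈ X, k ≤ {w | w ∈ X ∧ H.Adj v w}.ncard)

/-- A sibling set of size `k`: an independent set of `k` vertices with a common neighbor. -/
def SiblingSet {V : Type*} (G : SimpleGraph V) (S : Set V) (k : ℕ) : Prop :=
  S.ncard = k ∧ IsIndep G S ∧ ∃ w : V, ∀ v ∈ S, G.Adj w v

lemma first_edge_aux {V : Type*} {G : SimpleGraph V} {u v x : V} (p : G.Walk u v) (hp : p.IsPath)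
    (h : s(u, x) ∈ p.edges) : x = p.getVert 1 := by
  cases p with
  | nil => simp at h
  | @cons _ b _ hadj q =>
    rw [SimpleGraph.Walk.edges_cons, List.mem_cons] at h
    rcases h with h | h
    · have hxb : x = b := Sym2.congr_right.mp h
      simp [hxb]
    · exfalso
      have hu : u ∈ q.support := SimpleGraph.Walk.fst_mem_support_of_mem_edges q h
      exact ((SimpleGraph.Walk.cons_isPath_iff _ _).mp hp).2 hu

lemma exists_leaf {V : Type*} [Fintype V] [Nonempty V] {G : SimpleGraph V}
    (hG : G.IsAcyclic) : ∃ v : V, {w | G.Adj v w}.ncard ≤ 1 := by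
  classical
  set P : Set ℕ := {n | ∃ (u v : V) (p : G.Walk u v), p.IsPath ∧ p.length = n} with hP
  have h0 : (0 : ℕ) ∈ P :=
    ⟨Classical.arbitrary V, Classical.arbitrary V, SimpleGraph.Walk.nil,
      SimpleGraph.Walk.IsPath.nil, rfl⟩
  have hbdd : BddAbove P := by
    refine ⟨Fintype.card V, ?_⟩
    rintro n ⟨u, v, p, hp, rfl⟩
    exact le_of_lt hp.length_lt
  obtain ⟨u, v, p, hp, hl⟩ := Nat.sSup_mem ⟨0, h0⟩ hbdd
  refine ⟨u, ?_⟩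
  have key : ∀ x, G.Adj u x → x = p.getVert 1 := by
    intro x hx
    have hxs : x ∈ p.support := by
      by_contra hxs
      have hcons : (SimpleGraph.Walk.cons hx.symm p).IsPath := hp.cons hxs
      have hle : p.length + 1 ≤ sSup P :=
        le_csSup hbdd ⟨x, v, _, hcons, by simp⟩
      omega
    have hxu : x ≠ u := fun h => G.loopless.irrefl u (h ▸ hx)
    have hq : (p.takeUntil x hxs).IsPath := hp.takeUntil hxs
    have hedge : s(x, u) ∈ (p.takeUntil x hxs).edges := by
      by_contra hni
      exact hG _ ((SimpleGraph.Walk.cons_isCycle_iff _ hx.symm).mpr ⟨hq, hni⟩)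
    have hedge' : s(u, x) ∈ p.edges :=
      p.edges_takeUntil_subset hxs (Sym2.eq_swap ▸ hedge)
    exact first_edge_aux p hp hedge'
  have hsub : {w | G.Adj u w} ⊆ {p.getVert 1} := fun x hx => key x hx
  calc {w | G.Adj u w}.ncard ≤ ({p.getVert 1} : Set V).ncard :=
        Set.ncard_le_ncard hsub (Set.toFinite _)
    _ = 1 := Set.ncard_singleton _

lemma exists_low_deg {V : Type*} [Fintype V] {G : SimpleGraph V} (hG : G.IsAcyclic)
    (X : Set V) (hX : X.Nonempty) : ∃ v ∈ X, {w | w ∈ X ∧ G.Adj v w}.ncard ≤ 1 := by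
  classical
  haveI : Nonempty X := hX.to_subtype
  have hac : (G.induce X).IsAcyclic := by
    intro v c hc
    exact hG _ (hc.map (f := (SimpleGraph.Embedding.induce X).toHom)
      (fun a b h => Subtype.val_injective h))
  obtain ⟨v, hv⟩ := exists_leaf hac
  refine ⟨v, v.2, ?_⟩
  have himg : {w | w ∈ X ∧ G.Adj v w} = Subtype.val '' {w | (G.induce X).Adj v w} := by
    ext w
    constructor
    · rintro ⟨hwX, hadj⟩
      exact ⟨⟨w, hwX⟩, by simpa using hadj, rfl⟩
    · rintro ⟨⟨w', hw'⟩, hadj, rfl⟩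
      exact ⟨hw', by simpa using hadj⟩
  rw [himg, Set.ncard_image_of_injective _ Subtype.val_injective]
  exact hv

theorem stmt13 {V : Type*} [Fintype V] (G : SimpleGraph V) (k : ℕ) (hk : 2 ≤ k)
    (hforest : G.IsAcyclic)
    (hcard : 2 * k + 2 ≤ Fintype.card V)
    (S : Set V) (hsib : SiblingSet G S k) :
    DegeneracyExactly (scomp G S) k := by
  classical
  obtain ⟨hScard, hindep, w₀, hw₀⟩ := hsib
  have hSfin : S.Finite := Set.toFinite S
  have hw₀S : w₀ ∉ S := fun h => G.loopless.irrefl w₀ (hw₀ w₀ h)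
  constructor
  · -- upper bound part
    intro X hX
    obtain ⟨v, hvX, hdeg⟩ := exists_low_deg hforest X hX
    refine ⟨v, hvX, ?_⟩
    by_cases hvS : v ∈ S
    · have hsub : {w | w ∈ X ∧ (scomp G S).Adj v w} ⊆
          (S \ {v}) ∪ {w | w ∈ X ∧ G.Adj v w} := by
        rintro w ⟨hwX, hne, h⟩
        rcases h with ⟨⟨_, hwS⟩, _⟩ | ⟨_, hadj⟩
        · exact Or.inl ⟨hwS, fun h => hne (Set.mem_singleton_iff.mp h).symm⟩
        · exact Or.inr ⟨hwX, hadj⟩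
      calc {w | w ∈ X ∧ (scomp G S).Adj v w}.ncard
          ≤ ((S \ {v}) ∪ {w | w ∈ X ∧ G.Adj v w}).ncard :=
            Set.ncard_le_ncard hsub (Set.toFinite _)
        _ ≤ (S \ {v}).ncard + {w | w ∈ X ∧ G.Adj v w}.ncard :=
            Set.ncard_union_le _ _
        _ ≤ (k - 1) + 1 := by
            gcongr
            · rw [Set.ncard_diff_singleton_of_mem hvS, hScard]
        _ ≤ k := by omega
    · have hsub : {w | w ∈ X ∧ (scomp G S).Adj v w} ⊆ {w | w ∈ X ∧ G.Adj v w} := by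
        rintro w ⟨hwX, _, h⟩
        rcases h with ⟨⟨hvS', _⟩, _⟩ | ⟨_, hadj⟩
        · exact absurd hvS' hvS
        · exact ⟨hwX, hadj⟩
      calc {w | w ∈ X ∧ (scomp G S).Adj v w}.ncard
          ≤ {w | w ∈ X ∧ G.Adj v w}.ncard := Set.ncard_le_ncard hsub (Set.toFinite _)
        _ ≤ 1 := hdeg
        _ ≤ k := by omega
  · -- lower bound witness
    refine ⟨insert w₀ S, ⟨w₀, Set.mem_insert _ _⟩, ?_⟩
    intro v hv
    rcases hv with rfl | hvS
    · -- v = w₀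
      have hsub : S ⊆ {w | w ∈ insert v S ∧ (scomp G S).Adj v w} := by
        intro u hu
        refine ⟨Set.mem_insert_of_mem _ hu, (hw₀ u hu).ne, Or.inr ⟨?_, hw₀ u hu⟩⟩
        exact fun h => hw₀S h.1
      calc k = S.ncard := hScard.symm
        _ ≤ _ := Set.ncard_le_ncard hsub (Set.toFinite _)
    · -- v ∈ S
      have hsub : insert w₀ (S \ {v}) ⊆ {w | w ∈ insert w₀ S ∧ (scomp G S).Adj v w} := by
        rintro u (rfl | ⟨huS, hune⟩)
        · refine ⟨Set.mem_insert _ _, (hw₀ v hvS).symm.ne, Or.inr ⟨fun h => hw₀S h.2, (hw₀ v hvS).symm⟩⟩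
        · have hune' : u ≠ v := hune
          refine ⟨Set.mem_insert_of_mem _ huS, hune'.symm, Or.inl ⟨⟨hvS, huS⟩, hindep hvS huS⟩⟩
      have hcount : (insert w₀ (S \ {v})).ncard = k := by
        rw [Set.ncard_insert_of_notMem (fun h => hw₀S h.1) (Set.toFinite _),
          Set.ncard_diff_singleton_of_mem hvS, hScard]
        omega
      calc k = (insert w₀ (S \ {v})).ncard := hcount.symm
        _ ≤ _ := Set.ncard_le_ncard hsub (Set.toFinite _)
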